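/- Let W be a Weibull(1,β) random variable with CDF F_W(w) = 1 − e^{−w^β} for w > 0 and density f_W(w) = β w^{β−1} e^{−w^β}. Then the function f_Y(y) = 1 − F_W(1−y) + y·f_W(1−y) for 0 < y < 1 is a probability density function on (0,1); that is, f_Y ≥ 0 on (0,1) and ∫₀¹ f_Y(y) dy = 1. -/

import Mathlib

open Real Set intervalIntegral

theorem fY_is_density (β : ℝ) (hβ : 0 < β)
    (F_W : ℝ → ℝ) (f_W : ℝ → ℝ)
    (hFW : ∀ w : ℝ, 0 < w → F_W w = 1 - Real.exp (-(w ^ β)))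
    (hfW : ∀ w : ℝ, 0 < w → f_W w = β * w ^ (β - 1) * Real.exp (-(w ^ β))) :
    (∀ y ∈ Ioo (0:ℝ) 1, 0 ≤ 1 - F_W (1 - y) + y * f_W (1 - y)) ∧
    (∫ y in (0:ℝ)..1, (1 - F_W (1 - y) + y * f_W (1 - y))) = 1 := by
  have hpos : ∀ y ∈ Ioo (0:ℝ) 1, (0:ℝ) < 1 - y := fun y hy => by
    have := hy.2; linarith
  constructor
  · intro y hy
    rw [hFW _ (hpos y hy), hfW _ (hpos y hy)]
    have h1 : 0 < Real.exp (-((1 - y) ^ β)) := Real.exp_pos _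
    have h2 : 0 ≤ (1 - y) ^ (β - 1) := Real.rpow_nonneg (hpos y hy).le _
    nlinarith [mul_nonneg hy.1.le (mul_nonneg (mul_nonneg hβ.le h2) h1.le), h1.le]
  · set φ : ℝ → ℝ := fun y => Real.exp (-((1 - y) ^ β)) +
      (1 - y) ^ (β - 1) * (β * y * Real.exp (-((1 - y) ^ β))) with hφdef
    have hce : ∀ x : ℝ, ContinuousAt (fun y : ℝ => Real.exp (-((1 - y) ^ β))) x := by
      intro x
      have h1 : ContinuousAt (fun y : ℝ => 1 - y) x := by fun_prop
      have h2 : ContinuousAt (fun z : ℝ => z ^ β) (1 - x) :=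
        Real.continuousAt_rpow_const _ _ (Or.inr hβ.le)
      exact Real.continuous_exp.continuousAt.comp ((h2.comp h1).neg)
    have hcongr : (∫ y in (0:ℝ)..1, (1 - F_W (1 - y) + y * f_W (1 - y)))
        = ∫ y in (0:ℝ)..1, φ y := by
      apply intervalIntegral.integral_congr_ae
      have hone : ∀ᵐ x : ℝ, x ∈ ({(1:ℝ)}ᶜ : Set ℝ) :=
        MeasureTheory.compl_mem_ae_iff.mpr (MeasureTheory.measure_singleton 1)
      filter_upwards [hone] with x hx hxI
      rw [Set.uIoc_of_le (by norm_num : (0:ℝ) ≤ 1)] at hxI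
      have hxlt : x < 1 := lt_of_le_of_ne hxI.2 (by simpa using hx)
      have hx1 : (0:ℝ) < 1 - x := by linarith
      rw [hFW _ hx1, hfW _ hx1, hφdef]
      ring
    rw [hcongr]
    have hint1 : IntervalIntegrable (fun y : ℝ => Real.exp (-((1 - y) ^ β)))
        MeasureTheory.volume 0 1 :=
      (Continuous.continuousOn (continuous_iff_continuousAt.mpr hce)).intervalIntegrable
    have hbase : IntervalIntegrable (fun y : ℝ => (1 - y) ^ (β - 1))
        MeasureTheory.volume 0 1 := by
      have h := (intervalIntegrable_rpow' (a := 0) (b := 1)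
        (r := β - 1) (by linarith)).comp_sub_left 1
      simpa using h.symm
    have hint2 : IntervalIntegrable
        (fun y : ℝ => (1 - y) ^ (β - 1) * (β * y * Real.exp (-((1 - y) ^ β))))
        MeasureTheory.volume 0 1 := by
      apply hbase.mul_continuousOn
      apply Continuous.continuousOn
      exact (continuous_const.mul continuous_id).mul
        (continuous_iff_continuousAt.mpr hce)
    have hint : IntervalIntegrable φ MeasureTheory.volume 0 1 := hint1.add hint2
    have hderiv : ∀ x ∈ Ioo (0:ℝ) 1,
        HasDerivAt (fun y : ℝ => y * Real.exp (-((1 - y) ^ β))) (φ x) x := by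
      intro x hx
      have hx1 : (0:ℝ) < 1 - x := by have := hx.2; linarith
      have h1 : HasDerivAt (fun y : ℝ => 1 - y) (-1) x := by
        simpa using (hasDerivAt_id x).const_sub 1
      have h2 : HasDerivAt (fun y : ℝ => (1 - y) ^ β)
          (-1 * β * (1 - x) ^ (β - 1)) x := h1.rpow_const (Or.inl hx1.ne')
      have h3 : HasDerivAt (fun y : ℝ => Real.exp (-((1 - y) ^ β)))
          (Real.exp (-((1 - x) ^ β)) * -(-1 * β * (1 - x) ^ (β - 1))) x :=
        h2.neg.exp
      have h4 : HasDerivAt (fun y : ℝ => y * Real.exp (-((1 - y) ^ β)))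
          (1 * Real.exp (-((1 - x) ^ β)) + x * (Real.exp (-((1 - x) ^ β)) * -(-1 * β * (1 - x) ^ (β - 1)))) x :=
        (hasDerivAt_id x).mul h3
      convert h4 using 1
      simp only [hφdef, id_eq]
      ring
    have hcontg : ContinuousOn (fun y : ℝ => y * Real.exp (-((1 - y) ^ β)))
        (Set.Icc 0 1) :=
      (continuous_id.mul (continuous_iff_continuousAt.mpr hce)).continuousOn
    have := intervalIntegral.integral_eq_sub_of_hasDerivAt_of_le
      (by norm_num : (0:ℝ) ≤ 1) hcontg hderiv hint
    rw [this]
    simp [Real.zero_rpow hβ.ne']
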